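/- Let F be a nontrivial finite group and G = F^{(-ℕ)} × F^{ℕ₀} the restricted-times-full product with the right-shift automorphism T((x_n)_{n∈ℤ}) = (x_{n-1})_{n∈ℤ}. Then for every closed subgroup H of the compact group F^{ℕ₀} (viewed inside G), T^n(H) converges to the trivial subgroup as n → ∞, and the set of such closed subgroups H is uncountable. -/
import Mathlib

/-- Auxiliary subgroup: functions supported on a set `S` of coordinates. -/
def supportSubgroup (F : Type*) [Group F] (S : Set ℤ) : Subgroup (∀ _ : ℤ, F) where
  carrier := {x | ∀ k : ℤ, k ∉ S → x k = 1}
  one_mem' := fun _ _ => rfl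
  mul_mem' := by
    intro a b ha hb k hk
    simp [Pi.mul_apply, ha k hk, hb k hk]
  inv_mem' := by
    intro a ha k hk
    simp [Pi.inv_apply, ha k hk]

lemma supportSubgroup_closed (F : Type*) [Group F] [TopologicalSpace F] [DiscreteTopology F]
    [Finite F] (S : Set ℤ) : IsClosed ((supportSubgroup F S : Subgroup (∀ _ : ℤ, F)) :
      Set (∀ _ : ℤ, F)) := by
  have : ((supportSubgroup F S : Subgroup (∀ _ : ℤ, F)) : Set (∀ _ : ℤ, F)) =
      ⋂ k ∈ Sᶜ, (fun x : ∀ _ : ℤ, F => x k) ⁻¹' {1} := by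
    ext x
    simp [supportSubgroup, Set.mem_iInter]
  rw [this]
  exact isClosed_biInter fun k _ => (isClosed_singleton).preimage (continuous_apply k)

lemma mulSingle_mem_supportSubgroup (F : Type*) [Group F] (a : F) (ha : a ≠ 1) (S : Set ℤ)
    (k : ℤ) : Pi.mulSingle k a ∈ supportSubgroup F S ↔ k ∈ S := by
  constructor
  · intro h
    by_contra hk
    have := h k hk
    simp at this
    exact ha this
  · intro hk j hj
    have : j ≠ k := fun h => hj (h ▸ hk)
    simp [Pi.mulSingle_eq_of_ne this]

theorem shift_contracts_closed_subgroups (F : Type*) [Group F] [Finite F] [Nontrivial F]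
    [TopologicalSpace F] [DiscreteTopology F] :
    (∀ H : Subgroup (∀ _ : ℤ, F), IsClosed (H : Set (∀ _ : ℤ, F)) →
      (∀ x ∈ H, ∀ k : ℤ, k < 0 → x k = 1) →
      ∀ U ∈ nhds (1 : ∀ _ : ℤ, F), ∀ᶠ n : ℕ in Filter.atTop,
        (fun x : ∀ _ : ℤ, F => fun k : ℤ => x (k - n)) '' (H : Set (∀ _ : ℤ, F)) ⊆ U) ∧
    ¬ Set.Countable {H : Subgroup (∀ _ : ℤ, F) |
        IsClosed (H : Set (∀ _ : ℤ, F)) ∧ ∀ x ∈ H, ∀ k : ℤ, k < 0 → x k = 1} := by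
  constructor
  · intro H _ hsupp U hU
    rw [nhds_pi, Filter.mem_pi] at hU
    obtain ⟨I, hIfin, t, ht, hsub⟩ := hU
    obtain ⟨M, hM⟩ := hIfin.bddAbove
    refine Filter.eventually_atTop.2 ⟨(M + 1).toNat, fun n hn y hy => ?_⟩
    obtain ⟨x, hx, rfl⟩ := hy
    apply hsub
    intro k hk
    have hkM : k ≤ M := hM hk
    have hkn : k - (n : ℤ) < 0 := by
      have h1 : M + 1 ≤ (n : ℤ) ∨ M + 1 < 0 := by
        rcases le_or_gt 0 (M + 1) with h | h
        · left
          have := Int.toNat_le.mp hn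
          omega
        · right; exact h
      omega
    have h1 := hsupp x hx (k - n) hkn
    show x (k - (n : ℤ)) ∈ t k
    rw [h1]
    exact mem_of_mem_nhds (ht k)
  · intro hc
    obtain ⟨a, ha⟩ := exists_ne (1 : F)
    set bigset := {H : Subgroup (∀ _ : ℤ, F) |
        IsClosed (H : Set (∀ _ : ℤ, F)) ∧ ∀ x ∈ H, ∀ k : ℤ, k < 0 → x k = 1}
    set f : Set ℕ → Subgroup (∀ _ : ℤ, F) :=
      fun S => supportSubgroup F ((fun m : ℕ => (m : ℤ)) '' S) with hf
    have hmem : ∀ S, f S ∈ bigset := by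
      intro S
      refine ⟨supportSubgroup_closed F _, ?_⟩
      intro x hx k hk
      apply hx k
      rintro ⟨m, _, rfl⟩
      have hk' : ((m : ℤ)) < 0 := hk
      omega
    have hinj : Function.Injective f := by
      intro S S' hSS'
      ext m
      have h1 := mulSingle_mem_supportSubgroup F a ha ((fun m : ℕ => (m : ℤ)) '' S) (m : ℤ)
      have h2 := mulSingle_mem_supportSubgroup F a ha ((fun m : ℕ => (m : ℤ)) '' S') (m : ℤ)
      have himg : ∀ T : Set ℕ, ((m : ℤ) ∈ (fun m : ℕ => (m : ℤ)) '' T) ↔ m ∈ T := by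
        intro T
        constructor
        · rintro ⟨j, hj, hjm⟩
          have hjm' : (j : ℤ) = m := hjm
          have : j = m := by exact_mod_cast hjm'
          exact this ▸ hj
        · intro h; exact ⟨m, h, rfl⟩
      rw [himg] at h1 h2
      rw [← h1, ← h2]
      have : Pi.mulSingle (m : ℤ) a ∈ f S ↔ Pi.mulSingle (m : ℤ) a ∈ f S' := by rw [hSS']
      exact this
    have hcnt : Countable (Set ℕ) := by
      haveI := hc.to_subtype
      have hg : Function.Injective (fun S : Set ℕ => (⟨f S, hmem S⟩ : bigset)) :=
        fun S S' h => hinj (Subtype.ext_iff.mp h)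
      exact hg.countable
    obtain ⟨u, hu⟩ := exists_injective_nat (Set ℕ)
    exact Function.cantor_injective u hu
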